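/- Let s, y ∈ ℝⁿ with yᵀs ≠ 0, and define H = I − (y sᵀ + s yᵀ)/(yᵀs) + 2 (yᵀy)/(yᵀs)² · s sᵀ. Then H is a symmetric positive definite matrix: Hᵀ = H and zᵀHz > 0 for every nonzero z ∈ ℝⁿ. -/
import Mathlib


open Matrix

lemma dot_vecMulVec_mulVec {n : ℕ} (s y z : Fin n → ℝ) :
    z ⬝ᵥ (vecMulVec y s *ᵥ z) = (z ⬝ᵥ y) * (s ⬝ᵥ z) := by
  simp only [mulVec, vecMulVec_apply, dotProduct, Finset.mul_sum, Finset.sum_mul]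
  rw [Finset.sum_comm]
  congr 1; ext i; congr 1; ext j; ring

lemma vecMulVec_transpose' {n : ℕ} (y s : Fin n → ℝ) :
    (vecMulVec y s)ᵀ = vecMulVec s y := by
  ext i j; simp [vecMulVec_apply, mul_comm]

/-- The L-BFGS matrix `H` is symmetric positive definite (Lemma 1(i)). -/
theorem stmt_5 {n : ℕ} (s y : Fin n → ℝ) (hys : y ⬝ᵥ s ≠ 0)
    (H : Matrix (Fin n) (Fin n) ℝ)
    (hH : H = 1 - (y ⬝ᵥ s)⁻¹ • (vecMulVec y s + vecMulVec s y)
        + (2 * (y ⬝ᵥ y) / (y ⬝ᵥ s) ^ 2) • vecMulVec s s) :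
    Hᵀ = H ∧ ∀ z : Fin n → ℝ, z ≠ 0 → 0 < z ⬝ᵥ (H *ᵥ z) := by
  constructor
  · rw [hH]
    simp only [transpose_add, transpose_sub, transpose_smul, transpose_one,
      vecMulVec_transpose']
    rw [add_comm (vecMulVec s y)]
  · intro z hz
    have hy : y ≠ 0 := by
      intro h; apply hys; simp [h]
    -- expand the quadratic form
    have hexp : z ⬝ᵥ (H *ᵥ z) = z ⬝ᵥ z
        - (y ⬝ᵥ s)⁻¹ * ((z ⬝ᵥ y) * (s ⬝ᵥ z) + (z ⬝ᵥ s) * (y ⬝ᵥ z))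
        + (2 * (y ⬝ᵥ y) / (y ⬝ᵥ s) ^ 2) * ((z ⬝ᵥ s) * (s ⬝ᵥ z)) := by
      rw [hH]
      simp only [add_mulVec, sub_mulVec, smul_mulVec, one_mulVec,
        mulVec_add, dotProduct_add, dotProduct_sub, dotProduct_smul,
        dot_vecMulVec_mulVec, smul_eq_mul]
    set a := y ⬝ᵥ z with ha
    set b := s ⬝ᵥ z with hb
    set c := y ⬝ᵥ s with hc
    set Y := y ⬝ᵥ y with hY
    set Z := z ⬝ᵥ z with hZ
    have hcomm1 : z ⬝ᵥ y = a := dotProduct_comm z y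
    have hcomm2 : z ⬝ᵥ s = b := dotProduct_comm z s
    rw [hexp, hcomm1, hcomm2]
    have hYpos : 0 < Y := by
      rcases (Finset.sum_nonneg fun i _ => mul_self_nonneg (y i) : 0 ≤ Y).lt_or_eq with h | h
      · exact h
      · exact absurd ((dotProduct_self_eq_zero).mp h.symm) hy
    have hZpos : 0 < Z := by
      rcases (Finset.sum_nonneg fun i _ => mul_self_nonneg (z i) : 0 ≤ Z).lt_or_eq with h | h
      · exact h
      · exact absurd ((dotProduct_self_eq_zero).mp h.symm) hz
    have hCS : a ^ 2 ≤ Y * Z := by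
      have := Finset.sum_mul_sq_le_sq_mul_sq Finset.univ y z
      simpa [ha, hY, hZ, dotProduct, sq, Finset.mul_sum, mul_pow] using this
    have hc2 : (0:ℝ) < c ^ 2 := by positivity
    have key : Z - c⁻¹ * (a * b + b * a) + 2 * Y / c ^ 2 * (b * b)
        = (Z * c ^ 2 - 2 * a * b * c + 2 * Y * b ^ 2) / c ^ 2 := by
      field_simp
      ring
    rw [key]
    apply div_pos _ hc2
    nlinarith [sq_nonneg (a * c - 2 * Y * b), mul_pos hYpos hZpos,
      mul_pos (mul_pos hYpos hZpos) hc2, sq_nonneg b, sq_nonneg c,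
      mul_pos hYpos hc2]
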